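/- arXiv:2006.11533 — 2 statements merged into one kernel-verified Lean document; each statement's English description precedes it below -/
import Mathlib

section
/- Let $A^1,\dots,A^N : [0,\infty) \to \mathbb{R}^{d\times d}$ be $C^2$ matrix-valued curves solving $m(\ddot A^i (A^i)^T + \dot A^i(\dot A^i)^T) = -\gamma \dot A^i (A^i)^T + \frac{\kappa}{2N}\sum_{j=1}^N (A^j (A^i)^T - A^i (A^j)^T)$ with $m,\gamma > 0$, subject to initial constraints $A^i(0)(A^i(0))^T = I_d$ and $\dot A^i(0)(A^i(0))^T + A^i(0)(\dot A^i(0))^T = 0$. Then for each $i$, the matrix $M^i := A^i (A^i)^T$ satisfies the ODE $m\ddot M^i = -\gamma \dot M^i$. -/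
open scoped BigOperators
open Matrix

attribute [local instance] Matrix.frobeniusNormedAddCommGroup Matrix.frobeniusNormedSpace

attribute [local instance] Matrix.frobeniusNormedRing Matrix.frobeniusNormedAlgebra

private lemma hasDerivAt_transpose {d : ℕ} {f : ℝ → Matrix (Fin d) (Fin d) ℝ}
    {f' : Matrix (Fin d) (Fin d) ℝ} {t : ℝ} (hf : HasDerivAt f f' t) :
    HasDerivAt (fun s => (f s)ᵀ) f'ᵀ t := by
  have hlin : IsLinearMap ℝ (fun M : Matrix (Fin d) (Fin d) ℝ => Mᵀ) :=
    ⟨fun a b => Matrix.transpose_add a b, fun c a => Matrix.transpose_smul c a⟩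
  let L : Matrix (Fin d) (Fin d) ℝ →L[ℝ] Matrix (Fin d) (Fin d) ℝ :=
    (hlin.mk' _).toContinuousLinearMap
  have := L.hasFDerivAt.comp_hasDerivAt t hf
  exact this


/-- along the second-order Lohe matrix flow, `Mⁱ = Aⁱ(Aⁱ)ᵀ` solves
`m M̈ⁱ = -γ Ṁⁱ`. -/
theorem stmt3 (d N : ℕ) (A : Fin N → ℝ → Matrix (Fin d) (Fin d) ℝ)
    (m γ κ : ℝ) (hm : 0 < m) (hγ : 0 < γ)
    (hsmooth : ∀ i, ContDiff ℝ 2 (A i))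
    (hODE : ∀ i, ∀ t : ℝ, 0 ≤ t →
      m • (deriv (deriv (A i)) t * (A i t)ᵀ + deriv (A i) t * (deriv (A i) t)ᵀ) =
        -γ • (deriv (A i) t * (A i t)ᵀ) +
          (κ / (2 * N)) • ∑ j : Fin N, (A j t * (A i t)ᵀ - A i t * (A j t)ᵀ))
    (hinit1 : ∀ i, A i 0 * (A i 0)ᵀ = 1)
    (hinit2 : ∀ i, deriv (A i) 0 * (A i 0)ᵀ + A i 0 * (deriv (A i) 0)ᵀ = 0) :
    ∀ i, ∀ t : ℝ, 0 ≤ t →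
      m • deriv (deriv (fun s => A i s * (A i s)ᵀ)) t =
        -γ • deriv (fun s => A i s * (A i s)ᵀ) t := by
  intro i t ht
  have h2 : ContDiff ℝ ((1 : ℕ∞) + 1) (A i) := by
    have := hsmooth i
    norm_num at this ⊢
    exact this
  rw [contDiff_succ_iff_deriv] at h2
  have hdA : Differentiable ℝ (A i) := h2.1
  have hdA' : Differentiable ℝ (deriv (A i)) := h2.2.2.differentiable (by norm_num)
  -- first derivative of M
  have hM1 : ∀ s : ℝ, HasDerivAt (fun s => A i s * (A i s)ᵀ)
      (deriv (A i) s * (A i s)ᵀ + A i s * (deriv (A i) s)ᵀ) s := by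
    intro s
    exact ((hdA s).hasDerivAt.mul (hasDerivAt_transpose (hdA s).hasDerivAt))
  have hM1' : deriv (fun s => A i s * (A i s)ᵀ) =
      fun s => deriv (A i) s * (A i s)ᵀ + A i s * (deriv (A i) s)ᵀ := by
    funext s; exact (hM1 s).deriv
  -- second derivative
  have hM2 : HasDerivAt (fun s => deriv (A i) s * (A i s)ᵀ + A i s * (deriv (A i) s)ᵀ)
      ((deriv (deriv (A i)) t * (A i t)ᵀ + deriv (A i) t * (deriv (A i) t)ᵀ) +
       (deriv (A i) t * (deriv (A i) t)ᵀ + A i t * (deriv (deriv (A i)) t)ᵀ)) t := by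
    exact ((hdA' t).hasDerivAt.mul (hasDerivAt_transpose (hdA t).hasDerivAt)).add
      ((hdA t).hasDerivAt.mul (hasDerivAt_transpose (hdA' t).hasDerivAt))
  rw [hM1']
  erw [hM2.deriv]
  beta_reduce
  -- use the ODE and its transpose
  have hode := hODE i t ht
  have hodeT := congrArg Matrix.transpose hode
  simp only [Matrix.transpose_smul, Matrix.transpose_add, Matrix.transpose_mul,
    Matrix.transpose_sum, Matrix.transpose_sub, Matrix.transpose_transpose] at hodeT
  have key : m • ((deriv (deriv (A i)) t * (A i t)ᵀ + deriv (A i) t * (deriv (A i) t)ᵀ) +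
      (deriv (A i) t * (deriv (A i) t)ᵀ + A i t * (deriv (deriv (A i)) t)ᵀ)) =
      (m • (deriv (deriv (A i)) t * (A i t)ᵀ + deriv (A i) t * (deriv (A i) t)ᵀ)) +
      (m • (deriv (A i) t * (deriv (A i) t)ᵀ + A i t * (deriv (deriv (A i)) t)ᵀ)) := by
    rw [smul_add]
  have hodeT' : m • (deriv (A i) t * (deriv (A i) t)ᵀ + A i t * (deriv (deriv (A i)) t)ᵀ) =
      -γ • (A i t * (deriv (A i) t)ᵀ) +
        (κ / (2 * N)) • ∑ j : Fin N, (A i t * (A j t)ᵀ - A j t * (A i t)ᵀ) := by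
    rw [add_comm (deriv (A i) t * (deriv (A i) t)ᵀ)]
    exact hodeT
  rw [key, hode, hodeT', smul_add, add_add_add_comm]
  have hz : (κ / (2 * (N:ℝ))) • ∑ j : Fin N, (A j t * (A i t)ᵀ - A i t * (A j t)ᵀ) +
      (κ / (2 * (N:ℝ))) • ∑ j : Fin N, (A i t * (A j t)ᵀ - A j t * (A i t)ᵀ) = 0 := by
    rw [← smul_add, ← Finset.sum_add_distrib]
    simp
  rw [hz, add_zero]
end

section
/- Let $O^1,\dots,O^N : [0,\infty)\to SO(d)$ be smooth curves, $A^i(t)\in\mathbb{R}^{d\times d}$ symmetric matrices, and suppose $m\ddot O^i + \gamma\dot O^i - \frac{\kappa}{N}\sum_{k=1}^N (O^k - O^i) - A^i O^i = 0$ holds for each $i$. Then $A^i = -m\,\dot O^i(\dot O^i)^T - \frac{\kappa}{2N}\sum_{k=1}^N\big(O^k(O^i)^T + O^i(O^k)^T - 2I_d\big)$. -/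
open scoped BigOperators
open Matrix

attribute [local instance] Matrix.frobeniusNormedAddCommGroup Matrix.frobeniusNormedSpace
attribute [local instance] Matrix.frobeniusNormedRing Matrix.frobeniusNormedAlgebra
set_option maxHeartbeats 1000000

/-- the symmetric multiplier `Aⁱ` in the constrained Newton
equations on `SO(d)` is given explicitly. -/
theorem stmt9 (d N : ℕ) (O : Fin N → ℝ → Matrix (Fin d) (Fin d) ℝ)
    (A : Fin N → ℝ → Matrix (Fin d) (Fin d) ℝ)
    (m γ κ : ℝ)
    (hsmooth : ∀ i, ContDiff ℝ 2 (O i))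
    (hSO : ∀ i t, O i t * (O i t)ᵀ = 1 ∧ (O i t).det = 1)
    (hsym : ∀ i t, (A i t)ᵀ = A i t)
    (heq : ∀ i, ∀ t : ℝ, 0 ≤ t →
      m • deriv (deriv (O i)) t + γ • deriv (O i) t
        - (κ / N) • (∑ k : Fin N, (O k t - O i t)) - A i t * O i t = 0) :
    ∀ i, ∀ t : ℝ, 0 ≤ t →
      A i t = -m • (deriv (O i) t * (deriv (O i) t)ᵀ)
        - (κ / (2 * N)) • ∑ k : Fin N,
            (O k t * (O i t)ᵀ + O i t * (O k t)ᵀ - (2 : ℝ) • (1 : Matrix (Fin d) (Fin d) ℝ)) := by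
  intro i t ht
  -- differentiability facts
  have hdiff1 : Differentiable ℝ (O i) := (hsmooth i).differentiable (by norm_num)
  have hcd : ContDiff ℝ (1 + 1) (O i) := by norm_num; exact hsmooth i
  have hdiff2 : Differentiable ℝ (deriv (O i)) :=
    ((contDiff_succ_iff_deriv.mp hcd).2.2).differentiable (by norm_num)
  have hd1 : ∀ s, HasDerivAt (O i) (deriv (O i) s) s := fun s => (hdiff1 s).hasDerivAt
  have hd2 : ∀ s, HasDerivAt (deriv (O i)) (deriv (deriv (O i)) s) s :=
    fun s => (hdiff2 s).hasDerivAt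
  -- transpose as a continuous linear map
  let T : Matrix (Fin d) (Fin d) ℝ →L[ℝ] Matrix (Fin d) (Fin d) ℝ :=
    LinearMap.toContinuousLinearMap (Matrix.transposeLinearEquiv (Fin d) (Fin d) ℝ ℝ).toLinearMap
  have hT : ∀ s, HasDerivAt (fun u => (O i u)ᵀ) (deriv (O i) s)ᵀ s := by
    intro s
    have := T.hasFDerivAt.comp_hasDerivAt s (hd1 s)
    exact this
  have hT2 : ∀ s, HasDerivAt (fun u => (deriv (O i) u)ᵀ) (deriv (deriv (O i)) s)ᵀ s := by
    intro s
    have := T.hasFDerivAt.comp_hasDerivAt s (hd2 s)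
    exact this
  -- first identity : Ȯ Oᵀ + O Ȯᵀ = 0
  have h1 : ∀ s, deriv (O i) s * (O i s)ᵀ + O i s * (deriv (O i) s)ᵀ = 0 := by
    intro s
    have hprod : HasDerivAt (fun u => O i u * (O i u)ᵀ) _ s := (hd1 s).mul (hT s)
    have hconst : (fun u => O i u * (O i u)ᵀ) = fun _ => (1 : Matrix (Fin d) (Fin d) ℝ) :=
      funext fun u => (hSO i u).1
    rw [hconst] at hprod
    exact hprod.unique (hasDerivAt_const s 1)
  -- second identity
  have h2 : deriv (deriv (O i)) t * (O i t)ᵀ + deriv (O i) t * (deriv (O i) t)ᵀ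
      + (deriv (O i) t * (deriv (O i) t)ᵀ + O i t * (deriv (deriv (O i)) t)ᵀ) = 0 := by
    have hprod : HasDerivAt (fun u => deriv (O i) u * (O i u)ᵀ + O i u * (deriv (O i) u)ᵀ) _ t :=
      ((hd2 t).mul (hT t)).add ((hd1 t).mul (hT2 t))
    have hconst : (fun u => deriv (O i) u * (O i u)ᵀ + O i u * (deriv (O i) u)ᵀ)
        = fun _ => (0 : Matrix (Fin d) (Fin d) ℝ) := funext fun u => h1 u
    rw [hconst] at hprod
    exact hprod.unique (hasDerivAt_const t 0)
  -- abbreviations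
  set P := O i t with hP
  set P' := deriv (O i) t with hP'
  set P'' := deriv (deriv (O i)) t with hP''
  set S := ∑ k : Fin N, (O k t - O i t) with hS
  have hOrth : P * Pᵀ = 1 := (hSO i t).1
  have hM : A i t * P = m • P'' + γ • P' - (κ / N) • S := by
    have := heq i t ht
    linear_combination (norm := module) -this
  -- A = (A P) Pᵀ
  have hA1 : A i t = (m • P'' + γ • P' - (κ / N) • S) * Pᵀ := by
    calc A i t = A i t * (P * Pᵀ) := by rw [hOrth, mul_one]
    _ = (A i t * P) * Pᵀ := by rw [mul_assoc]
    _ = _ := by rw [hM]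
  have hA2 : A i t = P * (m • P'' + γ • P' - (κ / N) • S)ᵀ := by
    conv_lhs => rw [← hsym i t, hA1]
    rw [Matrix.transpose_mul, Matrix.transpose_transpose]
  -- sum identity
  have hSsum : S * Pᵀ + P * Sᵀ
      = ∑ k : Fin N, (O k t * Pᵀ + P * (O k t)ᵀ - (2 : ℝ) • (1 : Matrix (Fin d) (Fin d) ℝ)) := by
    rw [hS, Matrix.transpose_sum, Finset.sum_mul, Finset.mul_sum, ← Finset.sum_add_distrib]
    refine Finset.sum_congr rfl fun k _ => ?_
    rw [Matrix.transpose_sub, Matrix.sub_mul, Matrix.mul_sub, hOrth]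
    module
  -- combine
  have htwo : (2 : ℝ) • A i t = (2 : ℝ) • (-m • (P' * P'ᵀ)
      - (κ / (2 * N)) • ∑ k : Fin N,
          (O k t * Pᵀ + P * (O k t)ᵀ - (2 : ℝ) • (1 : Matrix (Fin d) (Fin d) ℝ))) := by
    have key : (2 : ℝ) • A i t
        = (m • P'' + γ • P' - (κ / N) • S) * Pᵀ + P * (m • P'' + γ • P' - (κ / N) • S)ᵀ := by
      rw [← hA1, ← hA2]; module
    rw [key]
    have expand : (m • P'' + γ • P' - (κ / N) • S) * Pᵀ + P * (m • P'' + γ • P' - (κ / N) • S)ᵀ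
        = m • (P'' * Pᵀ + P * P''ᵀ) + γ • (P' * Pᵀ + P * P'ᵀ) - (κ / N) • (S * Pᵀ + P * Sᵀ) := by
      simp only [Matrix.transpose_add, Matrix.transpose_sub, Matrix.transpose_smul,
        Matrix.add_mul, Matrix.sub_mul, Matrix.mul_add, Matrix.mul_sub, Matrix.smul_mul,
        Matrix.mul_smul]
      module
    rw [expand, h1 t, hSsum]
    have hmm : P'' * Pᵀ + P * P''ᵀ = -((2 : ℝ) • (P' * P'ᵀ)) := by
      linear_combination (norm := module) h2
    rw [hmm]
    have hκ : κ / (2 * N) = (κ / N) / 2 := by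
      rw [div_div]; ring_nf
    rw [hκ]
    match_scalars <;> ring
  have h2ne : (2 : ℝ) ≠ 0 := two_ne_zero
  have := smul_right_injective (Matrix (Fin d) (Fin d) ℝ) h2ne htwo
  rw [this]
end
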